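/- Let α ∈ ℂ and let φ, ψ : ℂ → ℂ be entire functions with ψ nowhere vanishing, satisfying ψ''(x) = (2x − 2ψ(x)φ(x))·ψ(x), φ''(x) = (2x − 2ψ(x)φ(x))·φ(x), and φ'(x)ψ(x) − φ(x)ψ'(x) = 2α for all x ∈ ℂ. Set z := −ψφ, u₋₁ := −ψ'/ψ, and let A, B be the matrices A(x,t) = [[t²/4 − z/2 − x/2, −(ψ/2)(t + u₋₁)], [(1/ψ)((u₋₁ − t)z/2 + α), −t²/4 + z/2 + x/2]], B(x,t) = [[−t/2, ψ], [z/ψ, t/2]]. Suppose Y₁, Y₂ : ℂ × ℂ → ℂ are differentiable in (x,t), satisfy ∂Y/∂t = AY and ∂Y/∂x = BY for Y = (Y₁, Y₂)ᵀ, and Y₁ is nowhere zero. Then F(x,t) := t·Y₂(x,t)/Y₁(x,t) satisfies both Riccati equations: t·∂F/∂x = −ψF² + t²F − t²φ, and 2t·∂F/∂t = −(ψ' − tψ)F² + ((ψ''/ψ)t + 2 − t³)F + t²(φ' + tφ), for all (x,t) ∈ ℂ². -/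

import Mathlib

/-- Jimbo–Miwa matrix `A` of the isomonodromic system for Painlevé II. -/
noncomputable def Amat (α : ℂ) (ψ z u : ℂ → ℂ) (x t : ℂ) : Matrix (Fin 2) (Fin 2) ℂ :=
  !![t ^ 2 / 4 - z x / 2 - x / 2, -(ψ x / 2) * (t + u x);
     (1 / ψ x) * ((u x - t) * z x / 2 + α), -t ^ 2 / 4 + z x / 2 + x / 2]

/-- Jimbo–Miwa matrix `B` of the isomonodromic system for Painlevé II. -/
noncomputable def Bmat (ψ z : ℂ → ℂ) (x t : ℂ) : Matrix (Fin 2) (Fin 2) ℂ :=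
  !![-t / 2, ψ x;
     z x / ψ x, t / 2]

/-- **Remark 2.9 (converse direction for `F`).** If `Y = (Y₁, Y₂)ᵀ` solves the
isomonodromic linear system `∂Y/∂t = AY`, `∂Y/∂x = BY` (with `z = −ψφ`, `u₋₁ = −ψ'/ψ`)
and `Y₁` is nowhere zero, then `F = t·Y₂/Y₁` satisfies both Riccati equations
`t F_x = −ψF² + t²F − t²φ` and
`2t F_t = −(ψ' − tψ)F² + ((ψ''/ψ)t + 2 − t³)F + t²(φ' + tφ)`. -/
theorem linear_system_solution_gives_riccati_F
    (α : ℂ) (φ ψ : ℂ → ℂ) (hφ : Differentiable ℂ φ) (hψ : Differentiable ℂ ψ)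
    (hψ0 : ∀ x : ℂ, ψ x ≠ 0)
    (hψ'' : ∀ x : ℂ, deriv (deriv ψ) x = (2 * x - 2 * ψ x * φ x) * ψ x)
    (hφ'' : ∀ x : ℂ, deriv (deriv φ) x = (2 * x - 2 * ψ x * φ x) * φ x)
    (hW : ∀ x : ℂ, deriv φ x * ψ x - φ x * deriv ψ x = 2 * α)
    (z u : ℂ → ℂ)
    (hz : z = fun x => -(ψ x * φ x))
    (hu : u = fun x => -(deriv ψ x / ψ x))
    (Y₁ Y₂ : ℂ → ℂ → ℂ)
    (hY₁diff : Differentiable ℂ fun p : ℂ × ℂ => Y₁ p.1 p.2)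
    (hY₂diff : Differentiable ℂ fun p : ℂ × ℂ => Y₂ p.1 p.2)
    (hY₁t : ∀ x t : ℂ, deriv (fun s => Y₁ x s) t =
      Amat α ψ z u x t 0 0 * Y₁ x t + Amat α ψ z u x t 0 1 * Y₂ x t)
    (hY₂t : ∀ x t : ℂ, deriv (fun s => Y₂ x s) t =
      Amat α ψ z u x t 1 0 * Y₁ x t + Amat α ψ z u x t 1 1 * Y₂ x t)
    (hY₁x : ∀ x t : ℂ, deriv (fun y => Y₁ y t) x =
      Bmat ψ z x t 0 0 * Y₁ x t + Bmat ψ z x t 0 1 * Y₂ x t)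
    (hY₂x : ∀ x t : ℂ, deriv (fun y => Y₂ y t) x =
      Bmat ψ z x t 1 0 * Y₁ x t + Bmat ψ z x t 1 1 * Y₂ x t)
    (hY₁0 : ∀ x t : ℂ, Y₁ x t ≠ 0)
    (F : ℂ → ℂ → ℂ)
    (hF : ∀ x t : ℂ, F x t = t * Y₂ x t / Y₁ x t) :
    ∀ x t : ℂ,
      t * deriv (fun y => F y t) x = -ψ x * (F x t) ^ 2 + t ^ 2 * F x t - t ^ 2 * φ x
        ∧
      2 * t * deriv (fun s => F x s) t =
        -(deriv ψ x - t * ψ x) * (F x t) ^ 2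
          + ((deriv (deriv ψ) x / ψ x) * t + 2 - t ^ 3) * F x t
          + t ^ 2 * (deriv φ x + t * φ x) := by
  intro x t
  have hψx := hψ0 x
  have hY1 := hY₁0 x t
  have dY1x : DifferentiableAt ℂ (fun y => Y₁ y t) x :=
    (hY₁diff (x, t)).comp (f := fun y => (y, t)) x ((DifferentiableAt.prodMk differentiableAt_fun_id (differentiableAt_const t)))
  have dY2x : DifferentiableAt ℂ (fun y => Y₂ y t) x :=
    (hY₂diff (x, t)).comp (f := fun y => (y, t)) x ((DifferentiableAt.prodMk differentiableAt_fun_id (differentiableAt_const t)))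
  have dY1t : DifferentiableAt ℂ (fun s => Y₁ x s) t :=
    (hY₁diff (x, t)).comp (f := fun s => (x, s)) t (((differentiableAt_const x).prodMk differentiableAt_fun_id))
  have dY2t : DifferentiableAt ℂ (fun s => Y₂ x s) t :=
    (hY₂diff (x, t)).comp (f := fun s => (x, s)) t (((differentiableAt_const x).prodMk differentiableAt_fun_id))
  have hFx : (fun y => F y t) = fun y => t * Y₂ y t / Y₁ y t := funext fun y => hF y t
  have hFt : (fun s => F x s) = fun s => s * Y₂ x s / Y₁ x s := funext fun s => hF x s
  have hα : α = (deriv φ x * ψ x - φ x * deriv ψ x) / 2 := by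
    linear_combination (-(1:ℂ)/2) * hW x
  constructor
  · rw [hFx, hF]
    rw [deriv_fun_div (dY2x.const_mul t) dY1x hY1, deriv_const_mul t dY2x,
      hY₁x x t, hY₂x x t]
    simp only [Bmat, Matrix.cons_val', Matrix.cons_val_zero, Matrix.cons_val_one,
      Matrix.head_cons, Matrix.empty_val', Matrix.cons_val_fin_one, Matrix.head_fin_const,
      Matrix.of_apply]
    subst hz hu
    field_simp
    ring
  · rw [hFt, hF, hψ'' x]
    rw [deriv_fun_div (differentiableAt_fun_id.fun_mul dY2t) dY1t hY1,
      deriv_fun_mul differentiableAt_fun_id dY2t, deriv_id'',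
      hY₁t x t, hY₂t x t]
    simp only [Amat, Matrix.cons_val', Matrix.cons_val_zero, Matrix.cons_val_one,
      Matrix.head_cons, Matrix.empty_val', Matrix.cons_val_fin_one, Matrix.head_fin_const,
      Matrix.of_apply]
    subst hz hu
    rw [hα]
    field_simp
    ring_nf
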